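/- If every simple object of C admits an epimorphism from a projective object of C, then C has enough projectives: every object of C admits an epimorphism from a projective object. -/
import Mathlib


open CategoryTheory CategoryTheory.Limits

/-- An object of an abelian category has finite length if it admits a finite filtration
`0 = V₀ ⊆ V₁ ⊆ ... ⊆ Vₙ = V` (encoded as a chain of monomorphisms) with all successive
quotients (cokernels of the monomorphisms) simple. -/
def HasFiniteLength {C : Type*} [Category C] [Abelian C] (V : C) : Prop :=
  ∃ (n : ℕ) (X : Fin (n + 1) → C) (f : ∀ i : Fin n, X i.castSucc ⟶ X i.succ),
    IsZero (X 0) ∧ Nonempty (X (Fin.last n) ≅ V) ∧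
      ∀ i : Fin n, Mono (f i) ∧ Simple (cokernel (f i))

/-- Horseshoe-style step: if `A` and `cokernel f` admit epimorphisms from projectives,
so does `V`, where `f : A ⟶ V` is mono. -/
lemma step {C : Type*} [Category C] [Abelian C] {A V : C} (f : A ⟶ V) [Mono f]
    {PA : C} (a : PA ⟶ A) [Projective PA] [Epi a]
    {PS : C} (e : PS ⟶ cokernel f) [Projective PS] [Epi e] :
    ∃ (P : C) (g : P ⟶ V), Projective P ∧ Epi g := by
  let l : PS ⟶ V := Projective.factorThru e (cokernel.π f)
  have hl : l ≫ cokernel.π f = e := Projective.factorThru_comp e (cokernel.π f)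
  refine ⟨PA ⊞ PS, biprod.desc (a ≫ f) l, inferInstance, ?_⟩
  apply Preadditive.epi_of_cancel_zero
  intro R q hq
  have h1 : a ≫ f ≫ q = 0 := by
    have := biprod.inl ≫= hq
    simpa using this
  have h2 : f ≫ q = 0 := by
    exact (cancel_epi a).1 (by rw [comp_zero]; exact h1)
  have h3 : q = cokernel.π f ≫ cokernel.desc f q h2 := (cokernel.π_desc f q h2).symm
  have h4 : l ≫ q = 0 := by
    have := biprod.inr ≫= hq
    simpa using this
  have h5 : e ≫ cokernel.desc f q h2 = 0 := by
    rw [← hl, Category.assoc, ← h3, h4]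
  have h6 : cokernel.desc f q h2 = 0 := by
    rwa [← cancel_epi e, comp_zero]
  rw [h3, h6, comp_zero]

theorem stmt3 (C : Type*) [Category C] [Abelian C]
    (finiteLength : ∀ V : C, HasFiniteLength V)
    (hsimple : ∀ S : C, Simple S → ∃ (P : C) (f : P ⟶ S), Projective P ∧ Epi f) :
    ∀ V : C, ∃ (P : C) (f : P ⟶ V), Projective P ∧ Epi f := by
  -- prove by strong induction on filtration length
  suffices h : ∀ (n : ℕ) (V : C) (X : Fin (n + 1) → C)
      (f : ∀ i : Fin n, X i.castSucc ⟶ X i.succ),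
      IsZero (X 0) → (X (Fin.last n) ≅ V) →
      (∀ i : Fin n, Mono (f i) ∧ Simple (cokernel (f i))) →
      ∃ (P : C) (g : P ⟶ V), Projective P ∧ Epi g by
    intro V
    obtain ⟨n, X, f, h0, ⟨iso⟩, hf⟩ := finiteLength V
    exact h n V X f h0 iso hf
  intro n
  induction n with
  | zero =>
    intro V X f h0 iso _
    have hV : IsZero V := h0.of_iso iso.symm
    refine ⟨V, 𝟙 V, ?_, inferInstance⟩
    constructor
    intro E Y g e he
    exact ⟨hV.to_ E, hV.eq_of_src _ _⟩
  | succ n ih =>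
    intro V X f h0 iso hf
    -- restrict filtration
    set A := X (Fin.last n).castSucc with hA
    obtain ⟨PA, a, hPA, ha⟩ := ih A (fun i => X i.castSucc)
      (fun i => f i.castSucc) h0 (Iso.refl _) (fun i => hf i.castSucc)
    have hlast := hf (Fin.last n)
    have : Mono (f (Fin.last n)) := hlast.1
    obtain ⟨PS, e, hPS, he⟩ := hsimple _ hlast.2
    haveI := hPA; haveI := ha; haveI := hPS; haveI := he
    obtain ⟨P, g, hP, hg⟩ := step (f (Fin.last n)) a e
    exact ⟨P, g ≫ iso.hom, hP, epi_comp _ _⟩
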